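/- Let D be a nonempty closed convex polyhedron in ℝ^d and let ε > 0. Then there exists an open convex set D', equal to an intersection of finitely many open halfspaces {x : ⟨a, x⟩ < b}, such that D ⊆ D' ⊆ B(D, ε). -/

import Mathlib

open scoped RealInnerProductSpace
open Finset


lemma coef_bound {d m : ℕ} (a : Fin m → EuclideanSpace ℝ (Fin d)) (s : Finset (Fin m))
    (hs : LinearIndependent ℝ (fun i : s => a i)) :
    ∃ K : ℝ, 0 ≤ K ∧ ∀ mu : Fin m → ℝ, (∑ i ∈ s, |mu i|) ≤ K * ‖∑ i ∈ s, mu i • a i‖ := by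
  classical
  let T : (s → ℝ) →ₗ[ℝ] EuclideanSpace ℝ (Fin d) :=
    { toFun := fun g => ∑ i : s, g i • a i
      map_add' := by intro g h; simp [add_smul, Finset.sum_add_distrib]
      map_smul' := by intro c g; simp [smul_smul, Finset.smul_sum]
    }
  have hTinj : Function.Injective T := by
    rw [← LinearMap.ker_eq_bot, LinearMap.ker_eq_bot']
    intro g hg
    funext i
    exact (Fintype.linearIndependent_iff.1 hs) g (by simpa [T] using hg) i
  let e : (s → ℝ) ≃ₗ[ℝ] LinearMap.range T := LinearEquiv.ofInjective T hTinj
  let f : LinearMap.range T →L[ℝ] (s → ℝ) := LinearMap.toContinuousLinearMap e.symm.toLinearMap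
  refine ⟨s.card * ‖f‖, by positivity, fun mu => ?_⟩
  set g : s → ℝ := fun i => mu i with hg
  have hTg : T g = ∑ i ∈ s, mu i • a i := by
    simp only [T, LinearMap.coe_mk, AddHom.coe_mk]
    rw [← Finset.sum_coe_sort s (fun i => mu i • a i)]
    rfl
  have hginv : f ⟨T g, LinearMap.mem_range_self T g⟩ = g := by
    have h1 : (⟨T g, LinearMap.mem_range_self T g⟩ : LinearMap.range T) = e g := by
      apply Subtype.ext
      simp [e, LinearEquiv.ofInjective_apply]
    have h2 : f (e g) = e.symm (e g) := rfl
    rw [h1, h2, e.symm_apply_apply]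
  have hnorm : ‖g‖ ≤ ‖f‖ * ‖T g‖ := by
    calc ‖g‖ = ‖f ⟨T g, LinearMap.mem_range_self T g⟩‖ := by rw [hginv]
    _ ≤ ‖f‖ * ‖(⟨T g, LinearMap.mem_range_self T g⟩ : LinearMap.range T)‖ := f.le_opNorm _
    _ = ‖f‖ * ‖T g‖ := rfl
  have hsum : ∑ i ∈ s, |mu i| ≤ s.card * ‖g‖ := by
    rw [← Finset.sum_coe_sort s (fun i => |mu i|)]
    calc (∑ i : s, |mu i|) ≤ ∑ _i : s, ‖g‖ := by
          refine Finset.sum_le_sum fun i _ => ?_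
          simpa [g, Real.norm_eq_abs] using norm_le_pi_norm g i
    _ = s.card * ‖g‖ := by simp [mul_comm]
  calc ∑ i ∈ s, |mu i| ≤ s.card * ‖g‖ := hsum
  _ ≤ s.card * (‖f‖ * ‖T g‖) := by
      apply mul_le_mul_of_nonneg_left hnorm (by positivity)
  _ = s.card * ‖f‖ * ‖∑ i ∈ s, mu i • a i‖ := by rw [hTg]; ring


lemma cone_cara {m : ℕ} {V : Type*} [AddCommGroup V] [Module ℝ V] (a : Fin m → V) :
    ∀ (A : Finset (Fin m)) (lam : Fin m → ℝ), (∀ i, 0 ≤ lam i) →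
    ∃ (s : Finset (Fin m)) (mu : Fin m → ℝ), s ⊆ A ∧ (∀ i, 0 ≤ mu i) ∧
      LinearIndependent ℝ (fun i : s => a i) ∧ ∑ i ∈ s, mu i • a i = ∑ i ∈ A, lam i • a i := by
  classical
  intro A
  induction A using Finset.strongInduction with
  | _ A ih =>
    intro lam hlam
    by_cases hind : LinearIndependent ℝ (fun i : A => a i)
    · exact ⟨A, lam, Finset.Subset.refl A, hlam, hind, rfl⟩
    · obtain ⟨g, hg0, i₀, hi₀⟩ := Fintype.not_linearIndependent_iff.1 hind
      -- extend g to Fin m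
      set G : Fin m → ℝ := fun i => if h : i ∈ A then g ⟨i, h⟩ else 0 with hG
      have hGsum : ∑ i ∈ A, G i • a i = 0 := by
        rw [← Finset.sum_coe_sort A (fun i => G i • a i)]
        rw [← hg0]
        apply Finset.sum_congr rfl
        intro i _
        simp [G, i.2]
      have hGne : G (i₀ : Fin m) ≠ 0 := by simpa [G, i₀.2] using hi₀
      -- WLOG some positive coordinate
      have key : ∀ (G : Fin m → ℝ), (∑ i ∈ A, G i • a i = 0) → (∀ j, G j ≠ 0 → j ∈ A) →
          ∀ j₀, 0 < G j₀ →
          ∃ (s : Finset (Fin m)) (mu : Fin m → ℝ), s ⊆ A ∧ (∀ i, 0 ≤ mu i) ∧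
            LinearIndependent ℝ (fun i : s => a i) ∧ ∑ i ∈ s, mu i • a i = ∑ i ∈ A, lam i • a i := by
        intro G hGsum hGsupp j₀ hj₀
        set P : Finset (Fin m) := A.filter (fun i => 0 < G i) with hP
        have hPne : P.Nonempty := ⟨j₀, Finset.mem_filter.2 ⟨hGsupp j₀ (ne_of_gt hj₀), hj₀⟩⟩
        obtain ⟨k, hkP, hkmin⟩ := Finset.exists_min_image P (fun i => lam i / G i) hPne
        have hGk : 0 < G k := (Finset.mem_filter.1 hkP).2
        have hkA : k ∈ A := (Finset.mem_filter.1 hkP).1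
        set t : ℝ := lam k / G k with ht
        have ht0 : 0 ≤ t := div_nonneg (hlam k) (le_of_lt hGk)
        set lam' : Fin m → ℝ := fun i => lam i - t * G i with hlam'
        have hlam'0 : ∀ i ∈ A, 0 ≤ lam' i := by
          intro i hiA
          by_cases hGi : 0 < G i
          · have : t ≤ lam i / G i := hkmin i (Finset.mem_filter.2 ⟨hiA, hGi⟩)
            have := (div_le_div_iff_of_pos_right hGi).2 this
            simp only [lam', sub_nonneg]
            calc t * G i ≤ (lam i / G i) * G i := by nlinarith
            _ = lam i := by field_simp
          · push_neg at hGi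
            simp only [lam', sub_nonneg]
            nlinarith [hlam i]
        have hlam'k : lam' k = 0 := by
          show lam k - lam k / G k * G k = 0
          rw [div_mul_cancel₀ _ hGk.ne', sub_self]
        have hsum' : ∑ i ∈ A, lam' i • a i = ∑ i ∈ A, lam i • a i := by
          simp only [lam', sub_smul, Finset.sum_sub_distrib, mul_smul]
          rw [← Finset.smul_sum, hGsum, smul_zero, sub_zero]
        -- restrict to A.erase k
        have hsum'' : ∑ i ∈ A.erase k, lam' i • a i = ∑ i ∈ A, lam' i • a i := by
          rw [← Finset.sum_erase_add A _ hkA, hlam'k]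
          simp
        set lam'' : Fin m → ℝ := fun i => if i ∈ A.erase k then lam' i else 0 with hlam''
        have h0 : ∀ i, 0 ≤ lam'' i := by
          intro i
          by_cases h : i ∈ A.erase k
          · simp only [lam'']; rw [if_pos h]; exact hlam'0 i (Finset.mem_of_mem_erase h)
          · simp only [lam'']; rw [if_neg h]
        have hsum3 : ∑ i ∈ A.erase k, lam'' i • a i = ∑ i ∈ A.erase k, lam' i • a i :=
          Finset.sum_congr rfl (fun i hi => by simp only [lam'']; rw [if_pos hi])
        obtain ⟨s, mu, hsub, hmu, hindep, heq⟩ :=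
          ih (A.erase k) (Finset.erase_ssubset hkA) lam'' h0
        exact ⟨s, mu, hsub.trans (Finset.erase_subset k A), hmu, hindep,
          by rw [heq, hsum3, hsum'', hsum']⟩
      by_cases hpos : ∃ j₀, 0 < G j₀
      · obtain ⟨j₀, hj₀⟩ := hpos
        exact key G hGsum (fun j hj => by by_contra h; exact hj (by simp [G, h])) j₀ hj₀
      · push_neg at hpos
        have : 0 < -G i₀ := by
          rcases lt_or_gt_of_ne hGne with h | h
          · linarith
          · exact absurd h (not_lt.2 (hpos i₀))
        refine key (-G) (by simpa [neg_smul] using congrArg Neg.neg hGsum) ?_ i₀ this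
        intro j hj
        by_contra h
        exact hj (by simp [G, h])

lemma cone_set_closed {d m : ℕ} (a : Fin m → EuclideanSpace ℝ (Fin d)) (A : Finset (Fin m)) :
    IsClosed {v : EuclideanSpace ℝ (Fin d) |
      ∃ lam : Fin m → ℝ, (∀ i, 0 ≤ lam i) ∧ v = ∑ i ∈ A, lam i • a i} := by
  classical
  have hun : {v : EuclideanSpace ℝ (Fin d) |
      ∃ lam : Fin m → ℝ, (∀ i, 0 ≤ lam i) ∧ v = ∑ i ∈ A, lam i • a i} =
      ⋃ s : Finset (Fin m), {v : EuclideanSpace ℝ (Fin d) |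
        (s ⊆ A ∧ LinearIndependent ℝ (fun i : s => a i)) ∧
        ∃ mu : Fin m → ℝ, (∀ i, 0 ≤ mu i) ∧ v = ∑ i ∈ s, mu i • a i} := by
    ext v
    simp only [Set.mem_setOf_eq, Set.mem_iUnion]
    constructor
    · rintro ⟨lam, hlam, rfl⟩
      obtain ⟨s, mu, hsub, hmu, hindep, heq⟩ := cone_cara a A lam hlam
      exact ⟨s, ⟨hsub, hindep⟩, mu, hmu, heq.symm⟩
    · rintro ⟨s, ⟨hsub, _⟩, mu, hmu, rfl⟩
      refine ⟨fun i => if i ∈ s then mu i else 0, fun i => by dsimp only; split <;> simp [hmu i], ?_⟩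
      rw [← Finset.sum_subset hsub (fun i _ hi => by simp only []; rw [if_neg hi, zero_smul])]
      exact Finset.sum_congr rfl fun i hi => by simp only []; rw [if_pos hi]
  rw [hun]
  refine isClosed_iUnion_of_finite fun s => ?_
  by_cases hs : s ⊆ A ∧ LinearIndependent ℝ (fun i : s => a i)
  · let T : (s → ℝ) →ₗ[ℝ] EuclideanSpace ℝ (Fin d) :=
      { toFun := fun g => ∑ i : s, g i • a i
        map_add' := by intro g h; simp [add_smul, Finset.sum_add_distrib]
        map_smul' := by intro c g; simp [smul_smul, Finset.smul_sum] }
    have hker : LinearMap.ker T = ⊥ := by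
      rw [LinearMap.ker_eq_bot']
      intro g hg
      funext i
      exact (Fintype.linearIndependent_iff.1 hs.2) g (by simpa [T] using hg) i
    have himg : {v : EuclideanSpace ℝ (Fin d) |
        (s ⊆ A ∧ LinearIndependent ℝ (fun i : s => a i)) ∧
        ∃ mu : Fin m → ℝ, (∀ i, 0 ≤ mu i) ∧ v = ∑ i ∈ s, mu i • a i} =
        T '' {g : s → ℝ | ∀ i, 0 ≤ g i} := by
      ext v
      simp only [Set.mem_setOf_eq, Set.mem_image]
      constructor
      · rintro ⟨-, mu, hmu, rfl⟩
        refine ⟨fun i => mu i, fun i => hmu i, ?_⟩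
        simp only [T, LinearMap.coe_mk, AddHom.coe_mk]
        exact Finset.sum_coe_sort s (fun i => mu i • a i)
      · rintro ⟨g, hg, rfl⟩
        refine ⟨hs, fun i => if h : i ∈ s then g ⟨i, h⟩ else 0,
          fun i => by dsimp only; split <;> [exact hg _; rfl], ?_⟩
        simp only [T, LinearMap.coe_mk, AddHom.coe_mk]
        rw [← Finset.sum_coe_sort s]
        exact (Finset.sum_congr rfl fun i _ => by rw [dif_pos i.2]).symm
    rw [himg]
    refine (LinearMap.isClosedEmbedding_of_injective hker).isClosedMap _ ?_
    have : {g : s → ℝ | ∀ i, 0 ≤ g i} = ⋂ i, {g : s → ℝ | 0 ≤ g i} := by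
      ext g; simp
    rw [this]
    exact isClosed_iInter fun i => isClosed_le continuous_const (continuous_apply i)
  · convert isClosed_empty
    ext v
    simp only [Set.mem_setOf_eq, Set.mem_empty_iff_false, iff_false]
    rintro ⟨h, -⟩
    exact hs h

lemma hoffman {d m : ℕ} (a : Fin m → EuclideanSpace ℝ (Fin d)) (b : Fin m → ℝ)
    (hne : {x : EuclideanSpace ℝ (Fin d) | ∀ i, ⟪a i, x⟫ ≤ b i}.Nonempty) {ε : ℝ} (hε : 0 < ε) :
    ∃ δ : ℝ, 0 < δ ∧ ∀ x : EuclideanSpace ℝ (Fin d), (∀ i, ⟪a i, x⟫ ≤ b i + δ) →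
      ∃ p ∈ {x : EuclideanSpace ℝ (Fin d) | ∀ i, ⟪a i, x⟫ ≤ b i}, dist x p < ε := by
  classical
  set D := {x : EuclideanSpace ℝ (Fin d) | ∀ i, ⟪a i, x⟫ ≤ b i} with hDdef
  have hDeq : D = ⋂ i, {x : EuclideanSpace ℝ (Fin d) | ⟪a i, x⟫ ≤ b i} := by
    ext x; simp [D]
  have hDconv : Convex ℝ D := by
    rw [hDeq]
    exact convex_iInter fun i => convex_halfSpace_le
      ⟨fun x y => inner_add_right _ _ _, fun c x => real_inner_smul_right _ _ _⟩ (b i)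
  have hDclosed : IsClosed D := by
    rw [hDeq]
    exact isClosed_iInter fun i =>
      isClosed_le (Continuous.inner continuous_const continuous_id) continuous_const
  -- the constant
  have hKex : ∀ s : Finset (Fin m), ∃ K : ℝ, 0 ≤ K ∧
      (LinearIndependent ℝ (fun i : s => a i) →
        ∀ mu : Fin m → ℝ, (∑ i ∈ s, |mu i|) ≤ K * ‖∑ i ∈ s, mu i • a i‖) := by
    intro s
    by_cases h : LinearIndependent ℝ (fun i : s => a i)
    · obtain ⟨K, hK0, hK⟩ := coef_bound a s h
      exact ⟨K, hK0, fun _ => hK⟩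
    · exact ⟨0, le_refl 0, fun h' => absurd h' h⟩
  choose K hK0 hKspec using hKex
  set C : ℝ := ∑ s : Finset (Fin m), K s with hC
  have hC0 : 0 ≤ C := Finset.sum_nonneg fun s _ => hK0 s
  have hCs : ∀ s, K s ≤ C := fun s =>
    Finset.single_le_sum (fun s _ => hK0 s) (Finset.mem_univ s)
  refine ⟨ε / (C + 1), by positivity, fun x hx => ?_⟩
  obtain ⟨p, hpD, hproj⟩ :=
    exists_norm_eq_iInf_of_complete_convex hne (hDclosed.isComplete) hDconv x
  have hproj' : ∀ w ∈ D, ⟪x - p, w - p⟫ ≤ 0 :=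
    (norm_eq_iInf_iff_real_inner_le_zero hDconv hpD).1 hproj
  set u := x - p with hu
  set A : Finset (Fin m) := Finset.univ.filter (fun i => ⟪a i, p⟫ = b i) with hA
  have hAact : ∀ i ∈ A, ⟪a i, p⟫ = b i := fun i hi => (Finset.mem_filter.1 hi).2
  have hslack : ∀ i, i ∉ A → ⟪a i, p⟫ < b i := by
    intro i hi
    refine lt_of_le_of_ne (hpD i) ?_
    intro h
    exact hi (Finset.mem_filter.2 ⟨Finset.mem_univ i, h⟩)
  -- the normal cone at p
  set S : Set (EuclideanSpace ℝ (Fin d)) :=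
    {v | ∃ lam : Fin m → ℝ, (∀ i, 0 ≤ lam i) ∧ v = ∑ i ∈ A, lam i • a i} with hS
  let Kc : ConvexCone ℝ (EuclideanSpace ℝ (Fin d)) :=
    { carrier := S
      smul_mem' := by
        rintro c hc v ⟨lam, hlam, rfl⟩
        refine ⟨fun i => c * lam i, fun i => mul_nonneg hc.le (hlam i), ?_⟩
        rw [Finset.smul_sum]
        exact Finset.sum_congr rfl fun i _ => by rw [smul_smul]
      add_mem' := by
        rintro v ⟨lam, hlam, rfl⟩ w ⟨lam', hlam', rfl⟩
        refine ⟨fun i => lam i + lam' i, fun i => add_nonneg (hlam i) (hlam' i), ?_⟩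
        rw [← Finset.sum_add_distrib]
        exact Finset.sum_congr rfl fun i _ => by rw [add_smul] }
  have hKcS : ∀ v, v ∈ Kc ↔ v ∈ S := fun v => Iff.rfl
  have hmem : u ∈ S := by
    by_contra hu'
    let PC : ProperCone ℝ (EuclideanSpace ℝ (Fin d)) :=
      { carrier := S
        add_mem' := fun hv hw => Kc.add_mem' hv hw
        zero_mem' := ⟨0, fun _ => le_refl 0, by simp⟩
        smul_mem' := by
          rintro c v ⟨lam, hlam, rfl⟩
          refine ⟨fun i => (c : ℝ) * lam i, fun i => mul_nonneg c.2 (hlam i), ?_⟩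
          show (c : ℝ) • ∑ i ∈ A, lam i • a i = _
          rw [Finset.smul_sum]
          exact Finset.sum_congr rfl fun i _ => by rw [smul_smul]
        isClosed' := cone_set_closed a A }
    obtain ⟨y, hy1, hy2⟩ := ProperCone.hyperplane_separation' PC (x₀ := u) hu'
    replace hy1 : ∀ x ∈ S, 0 ≤ ⟪x, y⟫ := hy1
    rw [real_inner_comm] at hy2
    have hai : ∀ i ∈ A, 0 ≤ ⟪a i, y⟫ := by
      intro i hi
      refine hy1 (a i) ⟨fun j => if j = i then 1 else 0, fun j => by dsimp only; split <;> norm_num, ?_⟩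
      have h1 : ∑ j ∈ A, (fun j => if j = i then (1:ℝ) else 0) j • a j
          = ∑ j ∈ A, (if j = i then a j else 0) := by
        refine Finset.sum_congr rfl fun j _ => ?_
        dsimp only; split <;> simp
      rw [h1, Finset.sum_ite_eq' A i a, if_pos hi]
    -- choose a step size t
    obtain ⟨t, ht0, ht⟩ : ∃ t : ℝ, 0 < t ∧ ∀ i, i ∉ A → t * |⟪a i, y⟫| ≤ b i - ⟪a i, p⟫ := by
      set s : Finset (Fin m) := Finset.univ.filter (fun i => i ∉ A) with hs
      rcases s.eq_empty_or_nonempty with hse | hsne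
      · refine ⟨1, one_pos, fun i hi => ?_⟩
        have his : i ∈ s := Finset.mem_filter.2 ⟨Finset.mem_univ i, hi⟩
        rw [hse] at his
        exact absurd his (Finset.notMem_empty i)
      · obtain ⟨k, hk, hkmin⟩ :=
          Finset.exists_min_image s (fun i => (b i - ⟪a i, p⟫) / (|⟪a i, y⟫| + 1)) hsne
        have hkA : k ∉ A := (Finset.mem_filter.1 hk).2
        have hknum : 0 < b k - ⟪a k, p⟫ := sub_pos.2 (hslack k hkA)
        have hkden : 0 < |⟪a k, y⟫| + 1 := by positivity
        refine ⟨(b k - ⟪a k, p⟫) / (|⟪a k, y⟫| + 1), div_pos hknum hkden, fun i hi => ?_⟩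
        have hiS : i ∈ s := Finset.mem_filter.2 ⟨Finset.mem_univ i, hi⟩
        have h2 := hkmin i hiS
        have hiden : 0 < |⟪a i, y⟫| + 1 := by positivity
        have h3 : (b k - ⟪a k, p⟫) / (|⟪a k, y⟫| + 1) * (|⟪a i, y⟫| + 1) ≤ b i - ⟪a i, p⟫ := by
          rw [← le_div_iff₀ hiden]
          exact h2
        nlinarith [abs_nonneg (⟪a i, y⟫ : ℝ), div_pos hknum hkden]
    have hz : p - t • y ∈ D := by
      intro i
      rw [inner_sub_right, real_inner_smul_right]
      by_cases hi : i ∈ A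
      · have h4 : 0 ≤ ⟪a i, y⟫ := hai i hi
        rw [hAact i hi]
        nlinarith
      · have h5 := ht i hi
        have h6 : -(t * ⟪a i, y⟫) ≤ t * |⟪a i, y⟫| := by
          have h9 := neg_abs_le (⟪a i, y⟫ : ℝ)
          nlinarith
        linarith
    have h7 := hproj' _ hz
    rw [sub_sub_cancel_left, inner_neg_right, real_inner_smul_right] at h7
    have h8 : 0 ≤ ⟪u, y⟫ := by
      by_contra hneg
      push_neg at hneg
      nlinarith
    rw [real_inner_comm] at h8
    linarith
  -- the quantitative estimate
  obtain ⟨lam, hlam0, hueq⟩ := hmem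
  obtain ⟨s, mu, hsA, hmu0, hindep, hsumeq⟩ := cone_cara a A lam hlam0
  have husum : ∑ i ∈ s, mu i • a i = u := by rw [hsumeq, ← hueq]
  set δ : ℝ := ε / (C + 1) with hδ
  have hδ0 : 0 < δ := by positivity
  have h1 : ‖u‖ ^ 2 = ∑ i ∈ s, mu i * ⟪a i, u⟫ := by
    rw [← real_inner_self_eq_norm_sq, ← husum, sum_inner]
    exact Finset.sum_congr rfl fun i _ => real_inner_smul_left _ _ _
  have h2 : ∀ i ∈ s, ⟪a i, u⟫ ≤ δ := by
    intro i hi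
    have hiA := hsA hi
    rw [hu, inner_sub_right, hAact i hiA]
    have := hx i
    linarith
  have h3 : ‖u‖ ^ 2 ≤ δ * ∑ i ∈ s, mu i := by
    rw [h1, Finset.mul_sum]
    refine Finset.sum_le_sum fun i hi => ?_
    rw [mul_comm δ (mu i)]
    exact mul_le_mul_of_nonneg_left (h2 i hi) (hmu0 i)
  have h4 : ∑ i ∈ s, mu i ≤ K s * ‖u‖ := by
    calc ∑ i ∈ s, mu i ≤ ∑ i ∈ s, |mu i| := Finset.sum_le_sum fun i _ => le_abs_self _
    _ ≤ K s * ‖∑ i ∈ s, mu i • a i‖ := hKspec s hindep mu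
    _ = K s * ‖u‖ := by rw [husum]
  have h5 : ‖u‖ ^ 2 ≤ δ * (C * ‖u‖) := by
    refine h3.trans (mul_le_mul_of_nonneg_left (h4.trans ?_) hδ0.le)
    exact mul_le_mul_of_nonneg_right (hCs s) (norm_nonneg u)
  have h6 : ‖u‖ ≤ δ * C := by
    rcases eq_or_lt_of_le (norm_nonneg u) with h | h
    · rw [← h]; positivity
    · nlinarith
  have h7 : δ * C < ε := by
    rw [hδ, div_mul_eq_mul_div, div_lt_iff₀ (by linarith)]
    nlinarith
  exact ⟨p, hpD, by rw [dist_eq_norm]; exact lt_of_le_of_lt h6 h7⟩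


/-- A (closed convex) polyhedron in Euclidean space `ℝ^d`: an intersection of finitely many
closed halfspaces `{x : ⟨a, x⟩ ≤ b}`. -/
def IsEuclideanPolyhedron {d : ℕ} (S : Set (EuclideanSpace ℝ (Fin d))) : Prop :=
  ∃ (m : ℕ) (a : Fin m → EuclideanSpace ℝ (Fin d)) (b : Fin m → ℝ),
    S = {x | ∀ i, ∑ j, a i j * x j ≤ b i}

/-- Any nonempty closed convex polyhedron `D` can be enclosed in an open set
`D'` that is an intersection of finitely many open halfspaces, with `D ⊆ D' ⊆ B(D, ε)`. -/
theorem polyhedron_open_halfspace_enclosure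
    {d : ℕ} (D : Set (EuclideanSpace ℝ (Fin d))) (hne : D.Nonempty)
    (hD : IsEuclideanPolyhedron D) (ε : ℝ) (hε : 0 < ε) :
    ∃ (m : ℕ) (a : Fin m → EuclideanSpace ℝ (Fin d)) (b : Fin m → ℝ),
      D ⊆ {x | ∀ i, ∑ j, a i j * x j < b i} ∧
      {x | ∀ i, ∑ j, a i j * x j < b i} ⊆ Metric.thickening ε D := by
  obtain ⟨m, a, b, hDab⟩ := hD
  have hsum : ∀ (v x : EuclideanSpace ℝ (Fin d)), ∑ j, v j * x j = ⟪v, x⟫ := fun v x => by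
    simp [PiLp.inner_apply, RCLike.inner_apply, starRingEnd_apply]
    exact Finset.sum_congr rfl fun _ _ => mul_comm _ _
  have hDab' : D = {x : EuclideanSpace ℝ (Fin d) | ∀ i, ⟪a i, x⟫ ≤ b i} := by
    rw [hDab]
    ext x
    simp only [Set.mem_setOf_eq, hsum]
  obtain ⟨δ, hδ0, hδ⟩ := hoffman a b (hDab' ▸ hne) hε
  refine ⟨m, a, fun i => b i + δ, ?_, ?_⟩
  · intro x hx i
    show ∑ j, a i j * x j < b i + δ
    rw [hsum]
    have : ⟪a i, x⟫ ≤ b i := by rw [hDab'] at hx; exact hx i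
    linarith
  · intro x hx
    obtain ⟨p, hpD, hdist⟩ := hδ x (fun i => by
      have := hx i
      rw [hsum] at this
      exact this.le)
    rw [Metric.mem_thickening_iff]
    exact ⟨p, hDab' ▸ hpD, hdist⟩
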